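/- arXiv:1204.4495 — 4 statements merged into one kernel-verified Lean document; each statement's English description precedes it below -/
import Mathlib

section
/- Let X be a unital operator space contained in an operator system S ⊆ B(H), let φ: S → S be a unital completely contractive map with φ(x) = x for all x ∈ X, and let h ∈ S be self-adjoint. Then for every x ∈ X and λ ∈ ℂ, ‖x + λ(φ(h) − h)‖ ≥ ‖x‖; consequently the quotient seminorm of x modulo span{φ(h) − h} equals ‖x‖. -/
set_option synthInstance.maxHeartbeats 1000000
set_option maxHeartbeats 1000000

noncomputable section

open scoped ComplexOrder

/-- A positive operator on a complex inner-product space: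
`⟪v, T v⟫ ≥ 0` for every vector `v`. -/
def IsPosOp {E : Type} [NormedAddCommGroup E] [InnerProductSpace ℂ E]
    (T : E →L[ℂ] E) : Prop := ∀ v : E, 0 ≤ (inner ℂ v (T v) : ℂ)

/-- `B(H)`, the bounded operators on `H`. -/
abbrev BH (H : Type) [NormedAddCommGroup H] [InnerProductSpace ℂ H] : Type := H →L[ℂ] H

section Defs

variable {H K : Type}
variable [NormedAddCommGroup H] [InnerProductSpace ℂ H] [CompleteSpace H]
variable [NormedAddCommGroup K] [InnerProductSpace ℂ K] [CompleteSpace K]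

/-- The amplification of a matrix over `B(H)` to an operator on the Hilbert space
`ℓ²`-direct sum of `n` copies of `H`. -/
def amp {n : ℕ} (A : Matrix (Fin n) (Fin n) (BH H)) :
    (PiLp 2 fun _ : Fin n => H) →L[ℂ] PiLp 2 fun _ : Fin n => H :=
  ∑ i : Fin n, ∑ j : Fin n,
    ((PiLp.continuousLinearEquiv 2 ℂ fun _ : Fin n => H).symm.toContinuousLinearMap).comp
      ((ContinuousLinearMap.pi (Pi.single i (ContinuousLinearMap.id ℂ H))).comp
        ((A i j).comp
          ((ContinuousLinearMap.proj j).comp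
            ((PiLp.continuousLinearEquiv 2 ℂ fun _ : Fin n => H).toContinuousLinearMap))))

/-- The matrix norms defining the (concrete) operator space structure of `B(H)`. -/
def matNorm {n : ℕ} (A : Matrix (Fin n) (Fin n) (BH H)) : ℝ := ‖amp A‖

/-- The quotient matrix (semi)norm modulo a subset `J ⊆ B(H)`:
`‖[x i j] + Mₙ(J)‖ = inf { ‖[x i j + y i j]‖ : y i j ∈ J }`. -/
def qnorm (J : Set (BH H)) {n : ℕ} (A : Matrix (Fin n) (Fin n) (BH H)) : ℝ :=
  ⨅ B : Matrix (Fin n) (Fin n) J, matNorm (A + B.map fun b => (b : BH H))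

/-- The scalar-level quotient (semi)norm modulo a subset `J ⊆ B(H)`. -/
def qnorm1 (J : Set (BH H)) (a : BH H) : ℝ := ⨅ b : J, ‖a + (b : BH H)‖

/-- A self-adjoint subspace. -/
def StarClosed (I : Submodule ℂ (BH H)) : Prop := ∀ a ∈ I, star a ∈ I

/-- A completely contractive map defined on a subspace `X ⊆ B(H)` with values in `B(K)`. -/
def CCmap (X : Submodule ℂ (BH H)) (φ : X →ₗ[ℂ] BH K) : Prop :=
  ∀ (n : ℕ) (A : Matrix (Fin n) (Fin n) X),
    matNorm (A.map fun x => φ x) ≤ matNorm (A.map fun x => (x : BH H))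

/-- A completely isometric map defined on a subspace `X ⊆ B(H)` with values in `B(K)`. -/
def CImap (X : Submodule ℂ (BH H)) (φ : X →ₗ[ℂ] BH K) : Prop :=
  ∀ (n : ℕ) (A : Matrix (Fin n) (Fin n) X),
    matNorm (A.map fun x => φ x) = matNorm (A.map fun x => (x : BH H))

/-- A completely contractive map defined on all of `B(H)`. -/
def CCfull (φ : BH H →ₗ[ℂ] BH K) : Prop :=
  ∀ (n : ℕ) (A : Matrix (Fin n) (Fin n) (BH H)),
    matNorm (A.map fun a => φ a) ≤ matNorm A

/-- A completely positive map defined on all of `B(H)`. -/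
def CPfull (φ : BH H →ₗ[ℂ] BH H) : Prop :=
  ∀ (n : ℕ) (A : Matrix (Fin n) (Fin n) (BH H)),
    IsPosOp (amp A) → IsPosOp (amp (A.map fun a => φ a))

/-- A completely positive map defined on an operator (sub)system `S ⊆ B(H)`. -/
def CPmap (S : Submodule ℂ (BH H)) (φ : S →ₗ[ℂ] BH K) : Prop :=
  ∀ (n : ℕ) (A : Matrix (Fin n) (Fin n) S),
    IsPosOp (amp (A.map fun s => (s : BH H))) → IsPosOp (amp (A.map fun s => φ s))

/-- `J ⊆ B(K)` is boundary for `X` (embedded in `B(K)` via `j`) if the quotient map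
by `J` is completely isometric on (the copy of) `X`. -/
def IsBoundarySet (X : Submodule ℂ (BH H)) (j : X →ₗ[ℂ] BH K) (J : Set (BH K)) : Prop :=
  ∀ (n : ℕ) (A : Matrix (Fin n) (Fin n) X),
    qnorm J (A.map fun x => j x) = matNorm (A.map fun x => (x : BH H))

/-- A boundary subsystem for `X` in `B(H)`: a self-adjoint subspace on which the
quotient map is completely isometric on `X`. -/
def IsBoundary (X I : Submodule ℂ (BH H)) : Prop :=
  StarClosed I ∧ IsBoundarySet X X.subtype (I : Set (BH H))

/-- A maximal boundary subsystem for `X` in `B(H)`. -/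
def IsMaximalBoundary (X I : Submodule ℂ (BH H)) : Prop :=
  IsBoundary X I ∧ ∀ J : Submodule ℂ (BH H), IsBoundary X J → I ≤ J → J = I

/-- Complete contractivity for a linear self-map of the quotient operator space `B(H)/I`
(expressed via arbitrary representatives, as `qnorm` only depends on the classes). -/
def CCQuotEndo (I : Submodule ℂ (BH H)) (φ : (BH H ⧸ I) →ₗ[ℂ] BH H ⧸ I) : Prop :=
  ∀ (n : ℕ) (A B : Matrix (Fin n) (Fin n) (BH H)),
    (∀ i j, φ (I.mkQ (A i j)) = I.mkQ (B i j)) →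
      qnorm (I : Set (BH H)) B ≤ qnorm (I : Set (BH H)) A

/-- Complete contractivity for a linear map from a subspace `Z ⊆ B(K)` into the
quotient operator space `B(H)/I`. -/
def CCToQuot (Z : Submodule ℂ (BH K)) (I : Submodule ℂ (BH H))
    (φ : Z →ₗ[ℂ] BH H ⧸ I) : Prop :=
  ∀ (n : ℕ) (A : Matrix (Fin n) (Fin n) Z) (B : Matrix (Fin n) (Fin n) (BH H)),
    (∀ i j, I.mkQ (B i j) = φ (A i j)) →
      qnorm (I : Set (BH H)) B ≤ matNorm (A.map fun z => (z : BH K))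

/-- Injectivity of a (unital) operator space `S ⊆ B(H)` in the category of operator
spaces with unital completely contractive maps. -/
def Injective (S : Submodule ℂ (BH H)) : Prop :=
  ∀ (K : Type) [NormedAddCommGroup K] [InnerProductSpace ℂ K] [CompleteSpace K],
    ∀ (Z Y : Submodule ℂ (BH K)) (hZY : Z ≤ Y) (h1Z : (1 : BH K) ∈ Z)
      (φ : Z →ₗ[ℂ] BH H), (∀ z, φ z ∈ S) → CCmap Z φ → φ ⟨1, h1Z⟩ = 1 →
      ∃ ψ : Y →ₗ[ℂ] BH H, (∀ y, ψ y ∈ S) ∧ CCmap Y ψ ∧ ψ ⟨1, hZY h1Z⟩ = 1 ∧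
        ∀ z : Z, ψ (Submodule.inclusion hZY z) = φ z

/-- `(S, ι)` is an injective envelope of the unital operator space `X`:
a unital completely isometric extension which is injective and rigid. -/
structure IsInjEnvelope (X : Submodule ℂ (BH H)) (S : Submodule ℂ (BH K))
    (ι : X →ₗ[ℂ] BH K) : Prop where
  mem : ∀ x, ι x ∈ S
  one : (1 : BH K) ∈ S
  unital : ∀ h1 : (1 : BH H) ∈ X, ι ⟨1, h1⟩ = 1
  ci : CImap X ι
  inj : Injective S
  rigid : ∀ φ : S →ₗ[ℂ] BH K, (∀ s, φ s ∈ S) → CCmap S φ →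
    (∀ x : X, φ ⟨ι x, mem x⟩ = ι x) → ∀ s : S, φ s = (s : BH K)

/-- A (closed, two-sided) ideal of the C*-subalgebra `C ⊆ B(K)`, described as a subset. -/
def IsIdealSet (C : StarSubalgebra ℂ (BH K)) (J : Set (BH K)) : Prop :=
  J ⊆ (C : Set (BH K)) ∧ (0 : BH K) ∈ J ∧
    (∀ a ∈ J, ∀ b ∈ J, a + b ∈ J) ∧ (∀ (c : ℂ), ∀ a ∈ J, c • a ∈ J) ∧
    (∀ c ∈ C, ∀ a ∈ J, c * a ∈ J ∧ a * c ∈ J) ∧ IsClosed J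

/-- A boundary ideal for `X` (embedded via `j`) in the C*-cover `C`. -/
def IsBdryIdeal (X : Submodule ℂ (BH H)) (j : X →ₗ[ℂ] BH K)
    (C : StarSubalgebra ℂ (BH K)) (J : Set (BH K)) : Prop :=
  IsIdealSet C J ∧ IsBoundarySet X j J

/-- `(C, j)` is a C*-cover of the unital operator space `X`. -/
structure IsCstarCover (X : Submodule ℂ (BH H)) (C : StarSubalgebra ℂ (BH K))
    (j : X →ₗ[ℂ] BH K) : Prop where
  mem : ∀ x, j x ∈ C
  unital : ∀ h1 : (1 : BH H) ∈ X, j ⟨1, h1⟩ = 1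
  ci : CImap X j
  gen : C = (StarAlgebra.adjoin ℂ (Set.range fun x : X => j x)).topologicalClosure

end Defs
set_option linter.unusedSectionVars false

section Aux
variable {H : Type} [NormedAddCommGroup H] [InnerProductSpace ℂ H] [CompleteSpace H]

lemma amp_one_apply (M : Matrix (Fin 1) (Fin 1) (BH H)) (v : PiLp 2 fun _ : Fin 1 => H) :
    amp M v 0 = M 0 0 (v 0) := by
  simp [amp, ContinuousLinearMap.pi]

lemma piLp_norm_fin_one (v : PiLp 2 fun _ : Fin 1 => H) : ‖v‖ = ‖v 0‖ := by
  rw [PiLp.norm_eq_of_L2]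
  simp [Real.sqrt_sq (norm_nonneg _)]

lemma piLp_norm_eq_apply_zero (v : PiLp 2 fun _ : Fin 1 => H) : v = WithLp.toLp 2 (fun _ => v 0) := by
  ext i
  rw [Subsingleton.elim i 0]

lemma matNorm_fin_one (M : Matrix (Fin 1) (Fin 1) (BH H)) : matNorm M = ‖M 0 0‖ := by
  apply le_antisymm
  · apply ContinuousLinearMap.opNorm_le_bound _ (norm_nonneg _)
    intro v
    rw [piLp_norm_fin_one (amp M v), amp_one_apply, piLp_norm_fin_one v]
    exact (M 0 0).le_opNorm _
  · refine ContinuousLinearMap.opNorm_le_bound (M 0 0) (norm_nonneg (amp M)) ?_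
    intro w
    set v : PiLp 2 (fun _ : Fin 1 => H) := (WithLp.equiv 2 _).symm (fun _ => w) with hv
    have hv0 : v 0 = w := rfl
    have h1 : M 0 0 w = amp M v 0 := by rw [amp_one_apply, hv0]
    have h2 : ‖v‖ = ‖w‖ := by rw [piLp_norm_fin_one, hv0]
    rw [h1, ← h2]
    calc ‖amp M v 0‖ = ‖amp M v‖ := (piLp_norm_fin_one _).symm
      _ ≤ ‖amp M‖ * ‖v‖ := (amp M).le_opNorm _
      _ = matNorm M * ‖v‖ := rfl

end Aux

/-- if `φ` is a ucc self-map of an operator system `S` fixing `X` pointwise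
and `h ∈ S` is self-adjoint, then `span{φ(h) − h}` is a boundary subspace at level 1. -/
theorem norm_ge_of_ucc_fixing {H : Type} [NormedAddCommGroup H] [InnerProductSpace ℂ H]
    [CompleteSpace H] (X S : Submodule ℂ (BH H)) (hXS : X ≤ S)
    (h1X : (1 : BH H) ∈ X) (hSsa : StarClosed S)
    (φ : S →ₗ[ℂ] S) (hu : φ ⟨1, hXS h1X⟩ = ⟨1, hXS h1X⟩)
    (hcc : CCmap S (S.subtype ∘ₗ φ))
    (hfix : ∀ s : S, (s : BH H) ∈ X → φ s = s)
    (h : S) (hh : IsSelfAdjoint (h : BH H)) :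
    ∀ x ∈ X, (∀ lam : ℂ, ‖x‖ ≤ ‖x + lam • ((φ h - h : S) : BH H)‖) ∧
      qnorm1 ((Submodule.span ℂ {((φ h - h : S) : BH H)} : Submodule ℂ (BH H)) : Set (BH H)) x
        = ‖x‖ := by
  -- contractivity at level 1
  have hφ1 : ∀ s : S, ‖((φ s : S) : BH H)‖ ≤ ‖(s : BH H)‖ := by
    intro s
    have := hcc 1 (fun _ _ => s)
    rw [matNorm_fin_one, matNorm_fin_one] at this
    exact this
  have hcontr : ∀ (k : ℕ) (s : S), ‖(((φ ^ k) s : S) : BH H)‖ ≤ ‖(s : BH H)‖ := by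
    intro k
    induction k with
    | zero => intro s; simp [pow_zero]
    | succ k ih =>
      intro s
      have h1 : (φ ^ (k + 1)) s = (φ ^ k) (φ s) := by
        rw [pow_succ, Module.End.mul_apply]
      rw [h1]
      exact (ih (φ s)).trans (hφ1 s)
  intro x hx
  have key : ∀ lam : ℂ, ‖x‖ ≤ ‖x + lam • ((φ h - h : S) : BH H)‖ := by
    intro lam
    set x' : S := ⟨x, hXS hx⟩ with hx'
    set a : S := x' + lam • (φ h - h) with ha
    have hacoe : (a : BH H) = x + lam • ((φ h - h : S) : BH H) := rfl
    have hiter : ∀ k : ℕ, (φ ^ k) a = x' + lam • ((φ ^ (k + 1)) h - (φ ^ k) h) := by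
      intro k
      induction k with
      | zero => simp [ha, pow_zero, pow_one]
      | succ k ih =>
        have h1 : (φ ^ (k + 1)) a = φ ((φ ^ k) a) := by
          rw [pow_succ', Module.End.mul_apply]
        have h2 : (φ ^ (k + 2)) h = φ ((φ ^ (k + 1)) h) := by
          rw [pow_succ', Module.End.mul_apply]
        have h3 : (φ ^ (k + 1)) h = φ ((φ ^ k) h) := by
          rw [pow_succ', Module.End.mul_apply]
        rw [h1, ih, map_add, map_smul, map_sub, hfix x' hx, ← h2, ← h3]
    have hsum : ∀ k : ℕ, ∑ j ∈ Finset.range k, (((φ ^ j) a : S) : BH H)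
        = (k : ℂ) • x + lam • ((((φ ^ k) h : S) : BH H) - (h : BH H)) := by
      intro k
      induction k with
      | zero => simp [pow_zero]
      | succ k ih =>
        rw [Finset.sum_range_succ, ih, hiter k]
        push_cast [Submodule.coe_add, Submodule.coe_smul, Submodule.coe_sub]
        module
    -- norm bound for each k
    have hbound : ∀ k : ℕ, (k : ℝ) * ‖x‖ ≤ (k : ℝ) * ‖(a : BH H)‖
        + 2 * ‖lam‖ * ‖(h : BH H)‖ := by
      intro k
      have e1 : (k : ℂ) • x = (∑ j ∈ Finset.range k, (((φ ^ j) a : S) : BH H))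
          - lam • ((((φ ^ k) h : S) : BH H) - (h : BH H)) := by
        rw [hsum k]; abel
      have e2 : ‖(k : ℂ) • x‖ = (k : ℝ) * ‖x‖ := by
        rw [norm_smul, Complex.norm_natCast]
      have e3 : ‖∑ j ∈ Finset.range k, (((φ ^ j) a : S) : BH H)‖
          ≤ (k : ℝ) * ‖(a : BH H)‖ := by
        calc ‖∑ j ∈ Finset.range k, (((φ ^ j) a : S) : BH H)‖
            ≤ ∑ j ∈ Finset.range k, ‖(((φ ^ j) a : S) : BH H)‖ := norm_sum_le _ _
          _ ≤ ∑ _j ∈ Finset.range k, ‖(a : BH H)‖ :=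
              Finset.sum_le_sum fun j _ => hcontr j a
          _ = (k : ℝ) * ‖(a : BH H)‖ := by
              rw [Finset.sum_const, Finset.card_range, nsmul_eq_mul]
      have e4 : ‖lam • ((((φ ^ k) h : S) : BH H) - (h : BH H))‖
          ≤ 2 * ‖lam‖ * ‖(h : BH H)‖ := by
        rw [norm_smul]
        have := (norm_sub_le (((φ ^ k) h : S) : BH H) (h : BH H)).trans
          (by linarith [hcontr k h] : ‖(((φ ^ k) h : S) : BH H)‖ + ‖(h : BH H)‖
            ≤ 2 * ‖(h : BH H)‖)
        calc ‖lam‖ * ‖(((φ ^ k) h : S) : BH H) - (h : BH H)‖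
            ≤ ‖lam‖ * (2 * ‖(h : BH H)‖) := by
              exact mul_le_mul_of_nonneg_left this (norm_nonneg _)
          _ = 2 * ‖lam‖ * ‖(h : BH H)‖ := by ring
      calc (k : ℝ) * ‖x‖ = ‖(k : ℂ) • x‖ := e2.symm
        _ ≤ ‖∑ j ∈ Finset.range k, (((φ ^ j) a : S) : BH H)‖
            + ‖lam • ((((φ ^ k) h : S) : BH H) - (h : BH H))‖ := by
              rw [e1]; exact norm_sub_le _ _
        _ ≤ (k : ℝ) * ‖(a : BH H)‖ + 2 * ‖lam‖ * ‖(h : BH H)‖ := by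
              exact add_le_add e3 e4
    -- conclude
    rw [← hacoe]
    by_contra hlt
    push_neg at hlt
    set C := 2 * ‖lam‖ * ‖(h : BH H)‖ with hC
    have hCnn : 0 ≤ C := by positivity
    have hε : 0 < ‖x‖ - ‖(a : BH H)‖ := by linarith
    obtain ⟨k, hk⟩ := exists_nat_gt (C / (‖x‖ - ‖(a : BH H)‖))
    have h1 : C < (k : ℝ) * (‖x‖ - ‖(a : BH H)‖) := by
      rw [div_lt_iff₀ hε] at hk; linarith
    have h2 := hbound k
    nlinarith
  refine ⟨key, ?_⟩
  apply le_antisymm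
  · have h0 : (0 : BH H) ∈ (Submodule.span ℂ {((φ h - h : S) : BH H)} : Submodule ℂ (BH H)) :=
      Submodule.zero_mem _
    have := ciInf_le (f := fun b : (Submodule.span ℂ {((φ h - h : S) : BH H)}
        : Submodule ℂ (BH H)) => ‖x + (b : BH H)‖)
      ⟨0, by rintro y ⟨b, rfl⟩; exact norm_nonneg _⟩ ⟨0, h0⟩
    simpa [qnorm1] using this
  · apply le_ciInf
    intro b
    obtain ⟨c, hc⟩ := Submodule.mem_span_singleton.mp b.2
    rw [← hc]
    exact key c
end
end

section
/- Let X ⊆ B(H) be a unital operator space and let {I_k} be a chain (totally ordered family under inclusion) of boundary subsystems for X in B(H). Then the closed linear span J of the union ∪_k I_k is a boundary subsystem for X: for every ν and every [x_{ij}] ∈ M_ν(X), ‖[x_{ij}] + M_ν(J)‖ = ‖[x_{ij}]‖. Consequently, by Zorn's lemma, a maximal boundary subsystem for X in B(H) exists. -/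
set_option synthInstance.maxHeartbeats 1000000
set_option maxHeartbeats 1000000

noncomputable section

open scoped ComplexOrder

section Helpers

set_option linter.unusedSectionVars false

variable {H : Type} [NormedAddCommGroup H] [InnerProductSpace ℂ H] [CompleteSpace H]

lemma matNorm_nonneg {n : ℕ} (A : Matrix (Fin n) (Fin n) (BH H)) : 0 ≤ matNorm A :=
  norm_nonneg (amp A)

lemma amp_add {n : ℕ} (A B : Matrix (Fin n) (Fin n) (BH H)) :
    amp (A + B) = amp A + amp B := by
  simp [amp, Matrix.add_apply, ContinuousLinearMap.comp_add, ContinuousLinearMap.add_comp,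
    Finset.sum_add_distrib]

/-- coefficient bounding the contribution of an entry to `matNorm`. -/
def ampC (H : Type) [NormedAddCommGroup H] [InnerProductSpace ℂ H] (n : ℕ) (i j : Fin n) : ℝ :=
  ‖((PiLp.continuousLinearEquiv 2 ℂ fun _ : Fin n => H).symm.toContinuousLinearMap)‖ *
    (‖(ContinuousLinearMap.pi (Pi.single i (ContinuousLinearMap.id ℂ H)) :
        H →L[ℂ] ∀ _ : Fin n, H)‖ *
      ‖((ContinuousLinearMap.proj j : (∀ _ : Fin n, H) →L[ℂ] H).comp
          ((PiLp.continuousLinearEquiv 2 ℂ fun _ : Fin n => H).toContinuousLinearMap))‖)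

lemma ampC_nonneg (n : ℕ) (i j : Fin n) : 0 ≤ ampC H n i j := by
  unfold ampC; positivity

lemma matNorm_le_sum {n : ℕ} (C : Matrix (Fin n) (Fin n) (BH H)) :
    matNorm C ≤ ∑ i : Fin n, ∑ j : Fin n, ampC H n i j * ‖C i j‖ := by
  unfold matNorm amp
  refine le_trans (norm_sum_le
    (E := (PiLp 2 fun _ : Fin n => H) →L[ℂ] PiLp 2 fun _ : Fin n => H) Finset.univ _) ?_
  refine Finset.sum_le_sum fun i _ => ?_
  refine le_trans (norm_sum_le
    (E := (PiLp 2 fun _ : Fin n => H) →L[ℂ] PiLp 2 fun _ : Fin n => H) Finset.univ _) ?_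
  refine Finset.sum_le_sum fun j _ => ?_
  set f1 := ((PiLp.continuousLinearEquiv 2 ℂ fun _ : Fin n => H).symm.toContinuousLinearMap)
  set f2 : H →L[ℂ] ∀ _ : Fin n, H :=
    ContinuousLinearMap.pi (Pi.single i (ContinuousLinearMap.id ℂ H))
  set g : (PiLp 2 fun _ : Fin n => H) →L[ℂ] H :=
    (ContinuousLinearMap.proj j : (∀ _ : Fin n, H) →L[ℂ] H).comp
      ((PiLp.continuousLinearEquiv 2 ℂ fun _ : Fin n => H).toContinuousLinearMap)
  calc ‖f1.comp (f2.comp ((C i j).comp g))‖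
      ≤ ‖f1‖ * ‖f2.comp ((C i j).comp g)‖ := ContinuousLinearMap.opNorm_comp_le _ _
    _ ≤ ‖f1‖ * (‖f2‖ * ‖(C i j).comp g‖) := by
        gcongr; exact ContinuousLinearMap.opNorm_comp_le _ _
    _ ≤ ‖f1‖ * (‖f2‖ * (‖C i j‖ * ‖g‖)) := by
        gcongr; exact ContinuousLinearMap.opNorm_comp_le _ _
    _ = ampC H n i j * ‖C i j‖ := by unfold ampC; ring

lemma qnorm_le {J : Set (BH H)} {n : ℕ} (A : Matrix (Fin n) (Fin n) (BH H))
    (B : Matrix (Fin n) (Fin n) J) :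
    qnorm J A ≤ matNorm (A + B.map fun b => (b : BH H)) := by
  have hbdd : BddBelow (Set.range fun B' : Matrix (Fin n) (Fin n) J =>
      matNorm (A + B'.map fun b => (b : BH H))) := by
    refine ⟨0, ?_⟩
    rintro r ⟨B', rfl⟩
    exact matNorm_nonneg _
  exact ciInf_le hbdd B

lemma qnorm_le_matNorm {J : Set (BH H)} (h0 : (0 : BH H) ∈ J) {n : ℕ}
    (A : Matrix (Fin n) (Fin n) (BH H)) : qnorm J A ≤ matNorm A := by
  have h := qnorm_le (J := J) A (Matrix.of fun _ _ => (⟨0, h0⟩ : J))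
  refine le_trans h (le_of_eq ?_)
  congr 1
  ext i j : 2
  simp [Matrix.add_apply, Matrix.map_apply]

/-- Part 1: the closure of the sup of a chain of boundary subsystems is boundary. -/
lemma chain_boundary_aux {H : Type} [NormedAddCommGroup H]
    [InnerProductSpace ℂ H] [CompleteSpace H] (X : Submodule ℂ (BH H))
    {ι : Type} [Nonempty ι] (I : ι → Submodule ℂ (BH H))
    (hchain : IsChain (· ≤ ·) (Set.range I)) (hbd : ∀ k, IsBoundary X (I k)) :
    IsBoundary X (⨆ k, I k).topologicalClosure := by
  have hdir : Directed (· ≤ ·) I := directedOn_range.1 hchain.directedOn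
  have hmem : ∀ {x : BH H}, x ∈ (⨆ k, I k) → ∃ k, x ∈ I k := fun hx =>
    (Submodule.mem_iSup_of_directed I hdir).1 hx
  constructor
  · -- star closed
    intro a ha
    have ha' : a ∈ closure ((⨆ k, I k : Submodule ℂ (BH H)) : Set (BH H)) := ha
    have : star a ∈ closure ((⨆ k, I k : Submodule ℂ (BH H)) : Set (BH H)) := by
      refine map_mem_closure continuous_star ha' ?_
      intro x hx
      obtain ⟨k, hk⟩ := hmem hx
      exact Submodule.mem_iSup_of_mem k ((hbd k).1 x hk)
    exact this
  · -- boundary set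
    intro n A
    refine le_antisymm (qnorm_le_matNorm (Submodule.zero_mem _) _) ?_
    haveI : Nonempty (((⨆ k, I k).topologicalClosure : Submodule ℂ (BH H)) : Set (BH H)) :=
      ⟨0, Submodule.zero_mem _⟩
    refine le_ciInf fun B => ?_
    refine le_of_forall_pos_le_add fun ε hε => ?_
    set S : ℝ := ∑ i : Fin n, ∑ j : Fin n, ampC H n i j with hSdef
    have hS : 0 ≤ S :=
      Finset.sum_nonneg fun i _ => Finset.sum_nonneg fun j _ => ampC_nonneg n i j
    set δ : ℝ := ε / (S + 1) with hδdef
    have hδ : 0 < δ := div_pos hε (by linarith)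
    -- approximate each entry of B by an element of the union
    have happrox : ∀ i j : Fin n, ∃ y : BH H, (∃ k, y ∈ I k) ∧ ‖(B i j : BH H) - y‖ < δ := by
      intro i j
      have hBij : (B i j : BH H) ∈ closure ((⨆ k, I k : Submodule ℂ (BH H)) : Set (BH H)) :=
        (B i j).2
      obtain ⟨y, hy, hdy⟩ := Metric.mem_closure_iff.1 hBij δ hδ
      exact ⟨y, hmem hy, by rwa [dist_eq_norm] at hdy⟩
    choose y hy hclose using happrox
    choose kk hkk using hy
    -- common index
    classical
    obtain ⟨k₀, hk₀⟩ := hdir.finset_le (Finset.image (fun p : Fin n × Fin n => kk p.1 p.2)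
      Finset.univ)
    have hyk : ∀ i j, y i j ∈ I k₀ := fun i j =>
      hk₀ (kk i j) (Finset.mem_image.2 ⟨(i, j), Finset.mem_univ _, rfl⟩) (hkk i j)
    set Y : Matrix (Fin n) (Fin n) ((I k₀ : Set (BH H))) :=
      Matrix.of fun i j => ⟨y i j, hyk i j⟩ with hYdef
    set A' : Matrix (Fin n) (Fin n) (BH H) := A.map fun x => (x : BH H) with hA'def
    set Bm : Matrix (Fin n) (Fin n) (BH H) := B.map (fun b => (b : BH H)) with hBmdef
    set Ym : Matrix (Fin n) (Fin n) (BH H) := Y.map (fun b => (b : BH H)) with hYmdef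
    have key1 : matNorm A' = qnorm (I k₀ : Set (BH H)) A' := ((hbd k₀).2 n A).symm
    have key2 : qnorm (I k₀ : Set (BH H)) A' ≤ matNorm (A' + Ym) := qnorm_le A' Y
    have key3 : matNorm (A' + Ym) ≤ matNorm (A' + Bm) + matNorm (Ym - Bm) := by
      have hsplit : A' + Ym = (A' + Bm) + (Ym - Bm) := by abel
      rw [hsplit]
      show ‖amp ((A' + Bm) + (Ym - Bm))‖ ≤ ‖amp (A' + Bm)‖ + ‖amp (Ym - Bm)‖
      rw [amp_add]
      exact norm_add_le (amp (A' + Bm)) (amp (Ym - Bm))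
    have key4 : matNorm (Ym - Bm) ≤ ε := by
      refine le_trans (matNorm_le_sum (Ym - Bm)) ?_
      have hb : ∀ i j : Fin n, ampC H n i j * ‖(Ym - Bm) i j‖ ≤ ampC H n i j * δ := by
        intro i j
        refine mul_le_mul_of_nonneg_left ?_ (ampC_nonneg n i j)
        have he : (Ym - Bm) i j = -((B i j : BH H) - y i j) := by
          simp [hYmdef, hBmdef, hYdef, Matrix.sub_apply, Matrix.map_apply]
          rfl
        rw [he, norm_neg]
        exact (hclose i j).le
      have hfin : (0:ℝ) < S + 1 := by linarith
      calc (∑ i : Fin n, ∑ j : Fin n, ampC H n i j * ‖(Ym - Bm) i j‖)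
          ≤ ∑ i : Fin n, ∑ j : Fin n, ampC H n i j * δ :=
            Finset.sum_le_sum fun i _ => Finset.sum_le_sum fun j _ => hb i j
        _ = S * δ := by rw [hSdef]; simp [Finset.sum_mul]
        _ ≤ (S + 1) * δ := by nlinarith
        _ = ε := by rw [hδdef]; field_simp
    calc matNorm A' = qnorm (I k₀ : Set (BH H)) A' := key1
      _ ≤ matNorm (A' + Ym) := key2
      _ ≤ matNorm (A' + Bm) + matNorm (Ym - Bm) := key3
      _ ≤ matNorm (A' + Bm) + ε := by linarith [key4]

/-- The trivial subsystem is boundary. -/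
lemma bot_boundary {H : Type} [NormedAddCommGroup H]
    [InnerProductSpace ℂ H] [CompleteSpace H] (X : Submodule ℂ (BH H)) :
    IsBoundary X (⊥ : Submodule ℂ (BH H)) := by
  constructor
  · intro a ha
    simp only [Submodule.mem_bot] at ha ⊢
    simp [ha]
  · intro n A
    refine le_antisymm (qnorm_le_matNorm (Submodule.zero_mem _) _) ?_
    haveI : Nonempty (((⊥ : Submodule ℂ (BH H)) : Submodule ℂ (BH H)) : Set (BH H)) :=
      ⟨0, Submodule.zero_mem _⟩
    refine le_ciInf fun B => ?_
    have hB : (B.map fun b => (b : BH H)) = 0 := by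
      ext i j : 2
      have hz : (B i j : BH H) = 0 := by
        have h2 := (B i j).2
        rwa [SetLike.mem_coe, Submodule.mem_bot] at h2
      simp [Matrix.map_apply, hz]
    rw [hB, add_zero]
    exact le_of_eq rfl

end Helpers


/-- the closed linear span of a chain of boundary subsystems is a boundary
subsystem; consequently maximal boundary subsystems exist. -/
theorem chain_boundary_and_maximal_exists {H : Type} [NormedAddCommGroup H]
    [InnerProductSpace ℂ H] [CompleteSpace H] (X : Submodule ℂ (BH H))
    (h1X : (1 : BH H) ∈ X) {ι : Type} [Nonempty ι] (I : ι → Submodule ℂ (BH H))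
    (hchain : IsChain (· ≤ ·) (Set.range I)) (hbd : ∀ k, IsBoundary X (I k)) :
    IsBoundary X (⨆ k, I k).topologicalClosure ∧
      ∃ M : Submodule ℂ (BH H), IsBoundary X M ∧
        ∀ J : Submodule ℂ (BH H), IsBoundary X J → M ≤ J → J = M := by
  constructor
  · exact chain_boundary_aux X I hchain hbd
  · -- Zorn's lemma
    have hzorn := zorn_le₀ {J : Submodule ℂ (BH H) | IsBoundary X J} ?_
    · obtain ⟨m, hm⟩ := hzorn
      exact ⟨m, hm.1, fun J hJ hmJ => le_antisymm (hm.2 hJ hmJ) hmJ⟩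
    · intro c hcs hc
      rcases Set.eq_empty_or_nonempty c with rfl | hne
      · exact ⟨⊥, bot_boundary X, fun z hz => absurd hz (Set.notMem_empty z)⟩
      · haveI : Nonempty c := hne.to_subtype
        have hchain' : IsChain (· ≤ ·) (Set.range (fun k : c => (k : Submodule ℂ (BH H)))) := by
          rwa [Subtype.range_coe]
        have hb' : ∀ k : c, IsBoundary X (k : Submodule ℂ (BH H)) := fun k => hcs k.2
        refine ⟨(⨆ k : c, (k : Submodule ℂ (BH H))).topologicalClosure,
          chain_boundary_aux X _ hchain' hb', fun z hz => ?_⟩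
        exact le_trans (le_iSup (fun k : c => (k : Submodule ℂ (BH H))) ⟨z, hz⟩)
          (Submodule.le_topologicalClosure _)
end
end

section
/- Let (S₁, ι₁) and (S₂, ι₂) be two injective envelopes of a unital operator space X. Then there exists a unique unital completely isometric surjection φ: S₁ → S₂ with φ(ι₁(x)) = ι₂(x) for all x ∈ X. -/
set_option synthInstance.maxHeartbeats 1000000
set_option maxHeartbeats 1000000

noncomputable section

open scoped ComplexOrder

section Aux
variable {H K : Type}
variable [NormedAddCommGroup H] [InnerProductSpace ℂ H] [CompleteSpace H]
variable [NormedAddCommGroup K] [InnerProductSpace ℂ K] [CompleteSpace K]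

lemma amp_apply {n : ℕ} (A : Matrix (Fin n) (Fin n) (BH H))
    (v : PiLp 2 fun _ : Fin n => H) (i : Fin n) :
    amp A v i = ∑ j, A i j (v j) := by
  have key : (PiLp.continuousLinearEquiv 2 ℂ fun _ : Fin n => H) (amp A v) i
      = ∑ j, A i j (v j) := by
    rw [amp]
    simp only [ContinuousLinearMap.sum_apply]
    rw [map_sum, Finset.sum_apply]
    have : ∀ x : Fin n,
        ((PiLp.continuousLinearEquiv 2 ℂ fun _ : Fin n => H)
          (∑ j : Fin n,
            (((PiLp.continuousLinearEquiv 2 ℂ fun _ : Fin n => H).symm.toContinuousLinearMap).comp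
              ((ContinuousLinearMap.pi (Pi.single x (ContinuousLinearMap.id ℂ H))).comp
                ((A x j).comp
                  ((ContinuousLinearMap.proj j).comp
                    ((PiLp.continuousLinearEquiv 2 ℂ fun _ : Fin n => H).toContinuousLinearMap))))) v)) i
        = if x = i then ∑ j, A i j (v j) else 0 := by
      intro x
      simp only [ContinuousLinearMap.sum_apply]
      rw [map_sum, Finset.sum_apply]
      simp only [ContinuousLinearMap.comp_apply, ContinuousLinearEquiv.coe_coe,
        PiLp.continuousLinearEquiv_apply, PiLp.continuousLinearEquiv_symm_apply,
        ContinuousLinearMap.proj_apply, ContinuousLinearMap.pi_apply,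
        ContinuousLinearEquiv.apply_symm_apply, PiLp.toLp_apply,
        WithLp.ofLp_toLp, Pi.single_apply]
      by_cases hx : x = i
      · subst hx; simp
      · rw [Finset.sum_congr rfl fun j _ => by rw [if_neg (fun h : i = x => hx h.symm)]]; simp [hx]
    rw [Finset.sum_congr rfl fun x _ => this x]
    simp
  simpa using key
end Aux

section Aux2
variable {H K : Type}
variable [NormedAddCommGroup H] [InnerProductSpace ℂ H] [CompleteSpace H]
variable [NormedAddCommGroup K] [InnerProductSpace ℂ K] [CompleteSpace K]

lemma matNorm_const_zero {n : ℕ} :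
    matNorm (fun _ _ => (0 : BH H) : Matrix (Fin n) (Fin n) (BH H)) = 0 := by
  have h : amp (fun _ _ => (0 : BH H) : Matrix (Fin n) (Fin n) (BH H)) = 0 := by
    refine ContinuousLinearMap.ext fun v => ?_
    refine PiLp.ext fun i => ?_
    erw [amp_apply]
    simp
  exact (congrArg norm h).trans ContinuousLinearMap.opNorm_zero

lemma eq_zero_of_matNorm_one (y : BH H)
    (h : matNorm (fun _ _ => y : Matrix (Fin 1) (Fin 1) (BH H)) = 0) : y = 0 := by
  have hamp : amp (fun _ _ => y : Matrix (Fin 1) (Fin 1) (BH H)) = 0 :=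
    (ContinuousLinearMap.opNorm_zero_iff _).mp h
  refine ContinuousLinearMap.ext fun w => ?_
  have h2 : amp (fun _ _ => y : Matrix (Fin 1) (Fin 1) (BH H))
      ((WithLp.equiv 2 (Fin 1 → H)).symm fun _ => w) = 0 := by rw [hamp]; rfl
  have h3 := congrArg (fun f : PiLp 2 (fun _ : Fin 1 => H) => f 0) h2
  erw [amp_apply] at h3
  simpa [WithLp.equiv_symm_apply] using h3

lemma ci_inj {X : Submodule ℂ (BH H)} {j : X →ₗ[ℂ] BH K} (hj : CImap X j) :
    Function.Injective j := by
  have key : ∀ x : X, j x = 0 → x = 0 := by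
    intro x hx
    have h := hj 1 (fun _ _ => x)
    have hL : (Matrix.map (fun _ _ => x) fun y => j y)
        = fun (_ _ : Fin 1) => (0 : BH K) := by
      funext i k; exact hx
    rw [hL, matNorm_const_zero] at h
    have hR : (Matrix.map (fun _ _ => x) fun y => (y : BH H))
        = fun (_ _ : Fin 1) => (x : BH H) := rfl
    rw [hR] at h
    exact Subtype.ext (eq_zero_of_matNorm_one (x : BH H) h.symm)
  intro a b hab
  exact sub_eq_zero.mp (key (a - b) (by rw [map_sub, hab, sub_self]))

end Aux2

lemma exists_extension {H K₁ K₂ : Type}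
    [NormedAddCommGroup H] [InnerProductSpace ℂ H] [CompleteSpace H]
    [NormedAddCommGroup K₁] [InnerProductSpace ℂ K₁] [CompleteSpace K₁]
    [NormedAddCommGroup K₂] [InnerProductSpace ℂ K₂] [CompleteSpace K₂]
    (X : Submodule ℂ (BH H)) (h1X : (1 : BH H) ∈ X)
    (S₁ : Submodule ℂ (BH K₁)) (ι₁ : X →ₗ[ℂ] BH K₁)
    (S₂ : Submodule ℂ (BH K₂)) (ι₂ : X →ₗ[ℂ] BH K₂)
    (e₁ : IsInjEnvelope X S₁ ι₁) (e₂ : IsInjEnvelope X S₂ ι₂) :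
    ∃ Φ : S₁ →ₗ[ℂ] BH K₂, (∀ s, Φ s ∈ S₂) ∧ CCmap S₁ Φ ∧ Φ ⟨1, e₁.one⟩ = 1 ∧
      ∀ x : X, Φ ⟨ι₁ x, e₁.mem x⟩ = ι₂ x := by
  have hinj : Function.Injective ι₁ := ci_inj e₁.ci
  have hZS : LinearMap.range ι₁ ≤ S₁ := by rintro z ⟨x, rfl⟩; exact e₁.mem x
  have h1Z : (1 : BH K₁) ∈ LinearMap.range ι₁ := ⟨⟨1, h1X⟩, e₁.unital h1X⟩
  set e : X ≃ₗ[ℂ] LinearMap.range ι₁ := LinearEquiv.ofInjective ι₁ hinj with he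
  have hecoe : ∀ x : X, ((e x : LinearMap.range ι₁) : BH K₁) = ι₁ x := fun x => rfl
  set θ : LinearMap.range ι₁ →ₗ[ℂ] BH K₂ := ι₂ ∘ₗ e.symm.toLinearMap with hθ
  have hθcoe : ∀ z : LinearMap.range ι₁, (z : BH K₁) = ι₁ (e.symm z) := by
    intro z
    conv_lhs => rw [← e.apply_symm_apply z]
    exact hecoe _
  have hθmem : ∀ z, θ z ∈ S₂ := fun z => e₂.mem _
  have hθcc : CCmap (LinearMap.range ι₁) θ := by
    intro n A
    have h1 : (A.map fun z => θ z)
        = ((A.map fun z => e.symm z).map fun x => ι₂ x) := rfl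
    have h2 : (A.map fun z => (z : BH K₁))
        = ((A.map fun z => e.symm z).map fun x => ι₁ x) := by
      funext i k; exact hθcoe (A i k)
    rw [h1, h2, e₂.ci n _, e₁.ci n _]
  have hθ1 : θ ⟨1, h1Z⟩ = 1 := by
    have hs : e.symm ⟨1, h1Z⟩ = ⟨1, h1X⟩ := by
      apply hinj
      rw [← hθcoe ⟨1, h1Z⟩, e₁.unital h1X]
    show ι₂ (e.symm ⟨1, h1Z⟩) = 1
    rw [hs]; exact e₂.unital h1X
  obtain ⟨Φ, hmem, hcc, h1, hext⟩ :=
    e₂.inj K₁ (LinearMap.range ι₁) S₁ hZS h1Z θ hθmem hθcc hθ1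
  refine ⟨Φ, hmem, hcc, h1, fun x => ?_⟩
  have hx : Submodule.inclusion hZS (e x) = (⟨ι₁ x, e₁.mem x⟩ : S₁) := rfl
  have := hext (e x)
  rw [hx] at this
  rw [this]
  show ι₂ (e.symm (e x)) = ι₂ x
  rw [e.symm_apply_apply]

/-- uniqueness of the injective envelope: between two injective envelopes of
`X` there is a unique unital completely isometric surjection fixing (the copies of) `X`. -/
theorem injective_envelope_unique {H H₁ H₂ : Type}
    [NormedAddCommGroup H] [InnerProductSpace ℂ H] [CompleteSpace H]
    [NormedAddCommGroup H₁] [InnerProductSpace ℂ H₁] [CompleteSpace H₁]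
    [NormedAddCommGroup H₂] [InnerProductSpace ℂ H₂] [CompleteSpace H₂]
    (X : Submodule ℂ (BH H)) (h1X : (1 : BH H) ∈ X)
    (S₁ : Submodule ℂ (BH H₁)) (ι₁ : X →ₗ[ℂ] BH H₁)
    (S₂ : Submodule ℂ (BH H₂)) (ι₂ : X →ₗ[ℂ] BH H₂)
    (e₁ : IsInjEnvelope X S₁ ι₁) (e₂ : IsInjEnvelope X S₂ ι₂) :
    ∃! φ : S₁ →ₗ[ℂ] BH H₂, (∀ s, φ s ∈ S₂) ∧ CImap S₁ φ ∧
      (∀ t ∈ S₂, ∃ s : S₁, φ s = t) ∧ φ ⟨1, e₁.one⟩ = 1 ∧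
      ∀ x : X, φ ⟨ι₁ x, e₁.mem x⟩ = ι₂ x := by
  obtain ⟨Φ, Φmem, Φcc, Φ1, Φfix⟩ := exists_extension X h1X S₁ ι₁ S₂ ι₂ e₁ e₂
  obtain ⟨Ψ, Ψmem, Ψcc, Ψ1, Ψfix⟩ := exists_extension X h1X S₂ ι₂ S₁ ι₁ e₂ e₁
  -- ρ = Ψ ∘ Φ fixes S₁
  have ρeq : ∀ s : S₁, Ψ ⟨Φ s, Φmem s⟩ = (s : BH H₁) := by
    set ρ : S₁ →ₗ[ℂ] BH H₁ := Ψ ∘ₗ LinearMap.codRestrict S₂ Φ Φmem with hρ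
    have ρmem : ∀ s, ρ s ∈ S₁ := fun s => Ψmem _
    have ρcc : CCmap S₁ ρ := by
      intro n A
      have h1 : (A.map fun s => ρ s)
          = ((A.map fun s => LinearMap.codRestrict S₂ Φ Φmem s).map fun t => Ψ t) := rfl
      have h2 : ((A.map fun s => LinearMap.codRestrict S₂ Φ Φmem s).map fun t => (t : BH H₂))
          = (A.map fun s => Φ s) := rfl
      calc matNorm (A.map fun s => ρ s)
          ≤ matNorm ((A.map fun s => LinearMap.codRestrict S₂ Φ Φmem s).map fun t => (t : BH H₂)) := by
            rw [h1]; exact Ψcc n _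
        _ = matNorm (A.map fun s => Φ s) := by rw [h2]
        _ ≤ matNorm (A.map fun s => (s : BH H₁)) := Φcc n A
    have ρfix : ∀ x : X, ρ ⟨ι₁ x, e₁.mem x⟩ = ι₁ x := by
      intro x
      have h1 : LinearMap.codRestrict S₂ Φ Φmem ⟨ι₁ x, e₁.mem x⟩
          = (⟨ι₂ x, e₂.mem x⟩ : S₂) := Subtype.ext (Φfix x)
      show Ψ (LinearMap.codRestrict S₂ Φ Φmem ⟨ι₁ x, e₁.mem x⟩) = ι₁ x
      rw [h1]; exact Ψfix x
    exact fun s => e₁.rigid ρ ρmem ρcc ρfix s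
  have σeq : ∀ t : S₂, Φ ⟨Ψ t, Ψmem t⟩ = (t : BH H₂) := by
    set σ : S₂ →ₗ[ℂ] BH H₂ := Φ ∘ₗ LinearMap.codRestrict S₁ Ψ Ψmem with hσ
    have σmem : ∀ t, σ t ∈ S₂ := fun t => Φmem _
    have σcc : CCmap S₂ σ := by
      intro n A
      calc matNorm (A.map fun t => σ t)
          ≤ matNorm ((A.map fun t => LinearMap.codRestrict S₁ Ψ Ψmem t).map fun s => (s : BH H₁)) :=
            Φcc n _
        _ = matNorm (A.map fun t => Ψ t) := by rfl
        _ ≤ matNorm (A.map fun t => (t : BH H₂)) := Ψcc n A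
    have σfix : ∀ x : X, σ ⟨ι₂ x, e₂.mem x⟩ = ι₂ x := by
      intro x
      have h1 : LinearMap.codRestrict S₁ Ψ Ψmem ⟨ι₂ x, e₂.mem x⟩
          = (⟨ι₁ x, e₁.mem x⟩ : S₁) := Subtype.ext (Ψfix x)
      show Φ (LinearMap.codRestrict S₁ Ψ Ψmem ⟨ι₂ x, e₂.mem x⟩) = ι₂ x
      rw [h1]; exact Φfix x
    exact fun t => e₂.rigid σ σmem σcc σfix t
  refine ⟨Φ, ⟨Φmem, ?_, ?_, Φ1, Φfix⟩, ?_⟩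
  · -- complete isometry
    intro n A
    refine le_antisymm (Φcc n A) ?_
    have h1 : (A.map fun s => (s : BH H₁))
        = ((A.map fun s => LinearMap.codRestrict S₂ Φ Φmem s).map fun t => Ψ t) := by
      funext i k
      exact (ρeq (A i k)).symm
    have h2 : ((A.map fun s => LinearMap.codRestrict S₂ Φ Φmem s).map fun t => (t : BH H₂))
        = (A.map fun s => Φ s) := rfl
    calc matNorm (A.map fun s => (s : BH H₁))
        = matNorm ((A.map fun s => LinearMap.codRestrict S₂ Φ Φmem s).map fun t => Ψ t) := by
          rw [h1]
      _ ≤ matNorm ((A.map fun s => LinearMap.codRestrict S₂ Φ Φmem s).map fun t => (t : BH H₂)) :=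
          Ψcc n _
      _ = matNorm (A.map fun s => Φ s) := by rw [h2]
  · -- surjectivity
    intro t ht
    exact ⟨⟨Ψ ⟨t, ht⟩, Ψmem ⟨t, ht⟩⟩, σeq ⟨t, ht⟩⟩
  · -- uniqueness
    rintro φ' ⟨mem', ci', _surj', _one', fix'⟩
    have cc' : CCmap S₁ φ' := fun n A => le_of_eq (ci' n A)
    have τeq : ∀ s : S₁, Ψ ⟨φ' s, mem' s⟩ = (s : BH H₁) := by
      set τ : S₁ →ₗ[ℂ] BH H₁ := Ψ ∘ₗ LinearMap.codRestrict S₂ φ' mem' with hτ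
      have τmem : ∀ s, τ s ∈ S₁ := fun s => Ψmem _
      have τcc : CCmap S₁ τ := by
        intro n A
        calc matNorm (A.map fun s => τ s)
            ≤ matNorm ((A.map fun s => LinearMap.codRestrict S₂ φ' mem' s).map fun t => (t : BH H₂)) :=
              Ψcc n _
          _ = matNorm (A.map fun s => φ' s) := by rfl
          _ ≤ matNorm (A.map fun s => (s : BH H₁)) := cc' n A
      have τfix : ∀ x : X, τ ⟨ι₁ x, e₁.mem x⟩ = ι₁ x := by
        intro x
        have h1 : LinearMap.codRestrict S₂ φ' mem' ⟨ι₁ x, e₁.mem x⟩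
            = (⟨ι₂ x, e₂.mem x⟩ : S₂) := Subtype.ext (fix' x)
        show Ψ (LinearMap.codRestrict S₂ φ' mem' ⟨ι₁ x, e₁.mem x⟩) = ι₁ x
        rw [h1]; exact Ψfix x
      exact fun s => e₁.rigid τ τmem τcc τfix s
    refine LinearMap.ext fun s => ?_
    have h1 : (⟨Ψ ⟨φ' s, mem' s⟩, Ψmem _⟩ : S₁) = ⟨Ψ ⟨Φ s, Φmem s⟩, Ψmem _⟩ := by
      refine Subtype.ext ?_
      show Ψ ⟨φ' s, mem' s⟩ = Ψ ⟨Φ s, Φmem s⟩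
      rw [τeq s, ρeq s]
    have h2 := σeq ⟨φ' s, mem' s⟩
    have h3 := σeq ⟨Φ s, Φmem s⟩
    show φ' s = Φ s
    calc φ' s = Φ ⟨Ψ ⟨φ' s, mem' s⟩, Ψmem _⟩ := h2.symm
      _ = Φ ⟨Ψ ⟨Φ s, Φmem s⟩, Ψmem _⟩ := by rw [h1]
      _ = Φ s := h3
end
end

section
/- Let X ⊆ B(H) be a unital operator space, (E, j) an injective extension of X, and (S, ι) an injective envelope of X. Then any unital completely contractive map φ: E → S with φ(j(x)) = ι(x) for all x ∈ X is surjective. Moreover, if E = B(H), S ⊆ B(H), and ι = id_X, then φ ∘ φ = φ, i.e., φ is a projection onto S. -/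
set_option synthInstance.maxHeartbeats 1000000
set_option maxHeartbeats 1000000

noncomputable section

open scoped ComplexOrder

section Aux

variable {H : Type} [NormedAddCommGroup H] [InnerProductSpace ℂ H] [CompleteSpace H]

lemma amp_zero' {n : ℕ} : amp (0 : Matrix (Fin n) (Fin n) (BH H)) = 0 := by
  simp [amp]

lemma matNorm_zero' {n : ℕ} : matNorm (0 : Matrix (Fin n) (Fin n) (BH H)) = 0 := by
  show ‖amp (0 : Matrix (Fin n) (Fin n) (BH H))‖ = 0
  rw [amp_zero']
  exact ContinuousLinearMap.opNorm_zero

lemma eq_zero_of_matNorm_single (a : BH H)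
    (h : matNorm (Matrix.of fun _ _ : Fin 1 => a) = 0) : a = 0 := by
  have h' : ‖amp (Matrix.of fun _ _ : Fin 1 => a)‖ = 0 := h
  have hamp : amp (Matrix.of fun _ _ : Fin 1 => a) = 0 := norm_eq_zero.mp h'
  ext w
  have := congrArg (fun T => (T ((PiLp.continuousLinearEquiv 2 ℂ
      fun _ : Fin 1 => H).symm (fun _ => w))) 0) hamp
  simpa [amp, ContinuousLinearMap.sum_apply] using this

end Aux

/-- a ucc map from an injective extension to an injective envelope that
intertwines the embeddings of `X` is onto the envelope; moreover, if the extension is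
`B(H)` itself and the envelope sits in `B(H)` with the identity embedding, such a map is
a projection. -/
theorem onto_envelope_and_projection :
    (∀ (H K H₁ : Type)
      [NormedAddCommGroup H] [InnerProductSpace ℂ H] [CompleteSpace H]
      [NormedAddCommGroup K] [InnerProductSpace ℂ K] [CompleteSpace K]
      [NormedAddCommGroup H₁] [InnerProductSpace ℂ H₁] [CompleteSpace H₁]
      (X : Submodule ℂ (BH H)) (h1X : (1 : BH H) ∈ X)
      (E : Submodule ℂ (BH K)) (h1E : (1 : BH K) ∈ E) (j : X →ₗ[ℂ] BH K)
      (hjE : ∀ x, j x ∈ E) (hj1 : j ⟨1, h1X⟩ = 1) (hjci : CImap X j)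
      (hEinj : Injective E)
      (S : Submodule ℂ (BH H₁)) (ι : X →ₗ[ℂ] BH H₁) (env : IsInjEnvelope X S ι)
      (φ : E →ₗ[ℂ] BH H₁) (hφS : ∀ e, φ e ∈ S) (hφcc : CCmap E φ)
      (hφ1 : φ ⟨1, h1E⟩ = 1) (hint : ∀ x : X, φ ⟨j x, hjE x⟩ = ι x),
      ∀ t ∈ S, ∃ e : E, φ e = t) ∧
    (∀ (H : Type) [NormedAddCommGroup H] [InnerProductSpace ℂ H] [CompleteSpace H]
      (X S : Submodule ℂ (BH H)) (h1X : (1 : BH H) ∈ X) (hXS : X ≤ S)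
      (env : IsInjEnvelope X S (X.subtype))
      (φ : BH H →ₗ[ℂ] BH H) (hφcc : CCfull φ) (hφ1 : φ 1 = 1)
      (hφS : ∀ a, φ a ∈ S) (hφX : ∀ x ∈ X, φ x = x),
      ∀ a, φ (φ a) = φ a) := by
  constructor
  · intro H K H₁ _ _ _ _ _ _ _ _ _ X h1X E h1E j hjE hj1 hjci hEinj S ι env
      φ hφS hφcc hφ1 hint t ht
    -- ι is injective
    have hmn1 : ∀ (x : X), matNorm (Matrix.of fun _ _ : Fin 1 => ι x)
        = matNorm (Matrix.of fun _ _ : Fin 1 => (x : BH H)) := by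
      intro x
      have := env.ci 1 (Matrix.of fun _ _ => x)
      simpa [Matrix.map] using this
    have hmn2 : ∀ (x : X), matNorm (Matrix.of fun _ _ : Fin 1 => j x)
        = matNorm (Matrix.of fun _ _ : Fin 1 => (x : BH H)) := by
      intro x
      have := hjci 1 (Matrix.of fun _ _ => x)
      simpa [Matrix.map] using this
    have hinj : Function.Injective ι := by
      intro x y hxy
      have hz : ι (x - y) = 0 := by rw [map_sub, hxy, sub_self]
      have h0 : matNorm (Matrix.of fun _ _ : Fin 1 => ((x - y : X) : BH H)) = 0 := by
        rw [← hmn1 (x - y), hz]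
        have : (Matrix.of fun _ _ : Fin 1 => (0 : BH H₁)) = 0 := by
          ext i k; simp
        rw [this, matNorm_zero']
      have := eq_zero_of_matNorm_single _ h0
      have : (x : BH H) = y := by
        have := sub_eq_zero.mp (by simpa using this)
        exact_mod_cast this
      exact Subtype.ext this
    set Z : Submodule ℂ (BH H₁) := LinearMap.range ι with hZ
    have hZS : Z ≤ S := by
      rintro _ ⟨x, rfl⟩; exact env.mem x
    have h1Z : (1 : BH H₁) ∈ Z := ⟨⟨1, h1X⟩, env.unital h1X⟩
    set e := LinearEquiv.ofInjective ι hinj with he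
    set ψ₀ : Z →ₗ[ℂ] BH K := j.comp e.symm.toLinearMap with hψ₀
    have hcoe : ∀ z : Z, (z : BH H₁) = ι (e.symm z) := by
      intro z
      conv_lhs => rw [← e.apply_symm_apply z]
      rfl
    have hψ₀E : ∀ z, ψ₀ z ∈ E := fun z => hjE _
    have hψ₀cc : CCmap Z ψ₀ := by
      intro n A
      have h1 : (A.map fun z => (z : BH H₁)) = ((A.map fun z => e.symm z).map fun x => ι x) := by
        ext i k; simp [Matrix.map_apply, hcoe]
      have h2 : (A.map fun z => ψ₀ z) = ((A.map fun z => e.symm z).map fun x => j x) := by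
        ext i k; simp [Matrix.map_apply, hψ₀]
      rw [h1, h2, hjci n, env.ci n]
    have hψ₀1 : ψ₀ ⟨1, h1Z⟩ = 1 := by
      have : e.symm ⟨1, h1Z⟩ = ⟨1, h1X⟩ := by
        rw [LinearEquiv.symm_apply_eq]
        exact Subtype.ext (env.unital h1X).symm
      simp only [hψ₀, LinearMap.comp_apply, LinearEquiv.coe_toLinearMap, this]
      exact hj1
    obtain ⟨ψ, hψE, hψcc, hψ1, hψext⟩ := hEinj H₁ Z S hZS h1Z ψ₀ hψ₀E hψ₀cc hψ₀1
    set ψ' : S →ₗ[ℂ] E := ψ.codRestrict E hψE with hψ'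
    set χ : S →ₗ[ℂ] BH H₁ := φ.comp ψ' with hχ
    have hχS : ∀ s, χ s ∈ S := fun s => hφS _
    have hχcc : CCmap S χ := by
      intro n A
      calc matNorm (A.map fun s => χ s)
          = matNorm ((A.map fun s => ψ' s).map fun x => φ x) := by
            rw [Matrix.map_map]; rfl
        _ ≤ matNorm ((A.map fun s => ψ' s).map fun x => (x : BH K)) := hφcc n _
        _ = matNorm (A.map fun s => ψ s) := by rw [Matrix.map_map]; rfl
        _ ≤ matNorm (A.map fun s => (s : BH H₁)) := by
            calc matNorm (A.map fun s => ψ s) ≤ matNorm (A.map fun s => (s : BH H₁)) := hψcc n A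
      _ = matNorm (A.map fun s => (s : BH H₁)) := rfl
    have hχfix : ∀ x : X, χ ⟨ι x, env.mem x⟩ = ι x := by
      intro x
      have hz : (⟨ι x, env.mem x⟩ : S) = Submodule.inclusion hZS ⟨ι x, ⟨x, rfl⟩⟩ :=
        Subtype.ext rfl
      have hsymm : e.symm ⟨ι x, ⟨x, rfl⟩⟩ = x := by
        rw [LinearEquiv.symm_apply_eq]; rfl
      have hψval : ψ ⟨ι x, env.mem x⟩ = j x := by
        rw [hz, hψext]
        simp only [hψ₀, LinearMap.comp_apply, LinearEquiv.coe_toLinearMap, hsymm]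
      have : ψ' ⟨ι x, env.mem x⟩ = ⟨j x, hjE x⟩ := Subtype.ext hψval
      simp only [hχ, LinearMap.comp_apply, this]
      exact hint x
    have hrig := env.rigid χ hχS hχcc hχfix
    exact ⟨ψ' ⟨t, ht⟩, hrig ⟨t, ht⟩⟩
  · intro H _ _ _ X S h1X hXS env φ hφcc hφ1 hφS hφX a
    set ρ : S →ₗ[ℂ] BH H := φ.comp S.subtype with hρ
    have hρS : ∀ s, ρ s ∈ S := fun s => hφS _
    have hρcc : CCmap S ρ := by
      intro n A
      have := hφcc n (A.map fun s => (s : BH H))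
      rw [Matrix.map_map] at this
      exact this
    have hρfix : ∀ x : X, ρ ⟨X.subtype x, env.mem x⟩ = X.subtype x :=
      fun x => hφX _ x.2
    have hrig := env.rigid ρ hρS hρcc hρfix
    have : φ (φ a) = φ a := hrig ⟨φ a, hφS a⟩
    exact this
end
end
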